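/- Let p be an odd prime and R = (ZMod p)[L]/(L^p). Let e = Σ_{i=0}^{p−1} (i!)⁻¹ · L^i ∈ R be the truncated exponential (with (i!)⁻¹ the inverse of i! in ZMod p) and let ln(u) = −Σ_{i=1}^{p−1} i⁻¹ · u^i for u ∈ R. Then: (a) e^p = 1 in R; (b) ln(e) = L‾, the class of L in R; and (c) the (ZMod p)-algebra homomorphism (ZMod p)[t]/(t^p − 1) → R sending the class of t to e (well-defined by (a)) is an algebra isomorphism. -/

import Mathlib

open Polynomial

namespace Stmt15Aux

variable (p : ℕ) [Fact p.Prime]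

lemma fact_ne_zero {k : ℕ} (hk : k < p) : ((k.factorial : ZMod p)) ≠ 0 := by
  rw [Ne, ZMod.natCast_eq_zero_iff]
  intro h
  exact absurd ((Nat.Prime.dvd_factorial Fact.out).mp h) (Nat.not_le.mpr hk)

noncomputable def P (n : ZMod p) : Polynomial (ZMod p) :=
  ∑ k ∈ Finset.range p, C (n ^ k * (k.factorial : ZMod p)⁻¹) * X ^ k

lemma coeff_P (n : ZMod p) {k : ℕ} (hk : k < p) :
    (P p n).coeff k = n ^ k * (k.factorial : ZMod p)⁻¹ := by
  rw [P, finset_sum_coeff]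
  simp only [coeff_C_mul, coeff_X_pow, mul_ite, mul_one, mul_zero]
  rw [Finset.sum_ite_eq (Finset.range p) k]
  simp [hk]

lemma coeff_P_mul (a b : ZMod p) {k : ℕ} (hk : k < p) :
    (P p a * P p b).coeff k = (P p (a + b)).coeff k := by
  rw [coeff_mul, Finset.Nat.sum_antidiagonal_eq_sum_range_succ_mk, coeff_P p _ hk, add_pow]
  rw [Finset.sum_mul]
  refine Finset.sum_congr rfl fun i hi => ?_
  rw [Finset.mem_range, Nat.lt_succ_iff] at hi
  rw [coeff_P p _ (lt_of_le_of_lt hi hk), coeff_P p _ (lt_of_le_of_lt (Nat.sub_le _ _) hk)]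
  have hc : ((k.choose i * i.factorial * (k - i).factorial : ℕ) : ZMod p)
      = ((k.factorial : ℕ) : ZMod p) := by
    rw [Nat.choose_mul_factorial_mul_factorial hi]
  push_cast at hc
  have h1 : ((i.factorial : ZMod p)) ≠ 0 := fact_ne_zero p (lt_of_le_of_lt hi hk)
  have h2 : (((k - i).factorial : ZMod p)) ≠ 0 :=
    fact_ne_zero p (lt_of_le_of_lt (Nat.sub_le _ _) hk)
  have h3 : ((k.factorial : ZMod p)) ≠ 0 := fact_ne_zero p hk
  field_simp
  linear_combination (-(a ^ i * b ^ (k - i))) * hc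

lemma P_zero : P p 0 = 1 := by
  rw [P, Finset.sum_eq_single 0]
  · simp [Nat.factorial]
  · intro b _ hb
    simp [zero_pow hb]
  · intro h
    exact absurd (Finset.mem_range.mpr (Fact.out : p.Prime).pos) h

lemma X_pow_dvd_P (a b : ZMod p) :
    (X : Polynomial (ZMod p)) ^ p ∣ P p a * P p b - P p (a + b) := by
  rw [Polynomial.X_pow_dvd_iff]
  intro d hd
  rw [coeff_sub, coeff_P_mul p a b hd, sub_self]

lemma mk_P_mul (a b : ZMod p) :
    Ideal.Quotient.mk (Ideal.span {(X : Polynomial (ZMod p)) ^ p}) (P p a) *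
      Ideal.Quotient.mk (Ideal.span {(X : Polynomial (ZMod p)) ^ p}) (P p b) =
      Ideal.Quotient.mk (Ideal.span {(X : Polynomial (ZMod p)) ^ p}) (P p (a + b)) := by
  rw [← map_mul, Ideal.Quotient.eq, Ideal.mem_span_singleton]
  exact X_pow_dvd_P p a b

lemma mk_P_pow (n : ℕ) :
    Ideal.Quotient.mk (Ideal.span {(X : Polynomial (ZMod p)) ^ p}) (P p 1) ^ n =
      Ideal.Quotient.mk (Ideal.span {(X : Polynomial (ZMod p)) ^ p}) (P p (n : ZMod p)) := by
  induction n with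
  | zero => simp [P_zero]
  | succ n ih =>
      rw [pow_succ, ih, mk_P_mul]
      push_cast
      ring_nf

lemma sum_Icc_eq {M : Type*} [AddCommMonoid M] (f : ZMod p → M) :
    ∑ i ∈ Finset.Icc 1 (p - 1), f (i : ZMod p) = ∑ x : (ZMod p)ˣ, f x := by
  have hp1 : 1 ≤ p := (Fact.out : p.Prime).pos
  classical
  have h1 : ∑ i ∈ Finset.Icc 1 (p - 1), f (i : ZMod p)
      = ∑ x ∈ Finset.univ \ {(0 : ZMod p)}, f x := by
    refine Finset.sum_nbij' (fun i => (i : ZMod p)) (fun x => x.val) ?_ ?_ ?_ ?_ ?_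
    · intro a ha
      rw [Finset.mem_Icc] at ha
      simp only [Finset.mem_sdiff, Finset.mem_univ, Finset.mem_singleton, true_and]
      intro h0
      rw [ZMod.natCast_eq_zero_iff] at h0
      have := Nat.le_of_dvd (by omega) h0
      omega
    · intro x hx
      rw [Finset.mem_sdiff, Finset.mem_singleton] at hx
      rw [Finset.mem_Icc]
      have hv0 : x.val ≠ 0 := fun h => hx.2 ((ZMod.val_eq_zero x).mp h)
      have hvlt : x.val < p := x.val_lt
      show 1 ≤ x.val ∧ x.val ≤ p - 1
      omega
    · intro a ha
      rw [Finset.mem_Icc] at ha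
      exact ZMod.val_cast_of_lt (by omega)
    · intro x _
      exact ZMod.natCast_rightInverse x
    · intro a _
      rfl
  rw [h1]
  let φ : (ZMod p)ˣ ↪ ZMod p := ⟨fun x => x, Units.val_injective⟩
  have hφ : Finset.univ.map φ = Finset.univ \ {(0 : ZMod p)} := by
    ext x
    simp only [Finset.mem_map, Finset.mem_univ, Function.Embedding.coeFn_mk, true_and,
      Finset.mem_sdiff, Finset.mem_singleton, φ]
    constructor
    · rintro ⟨u, rfl⟩
      exact u.ne_zero
    · intro h
      exact ⟨Units.mk0 x h, rfl⟩
  rw [← hφ, Finset.sum_map]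
  rfl

lemma sum_pow_Icc (m : ℕ) :
    ∑ i ∈ Finset.Icc 1 (p - 1), ((i : ZMod p)) ^ m = if (p - 1) ∣ m then -1 else 0 := by
  classical
  rw [sum_Icc_eq p (fun x => x ^ m)]
  have := FiniteField.sum_pow_units (ZMod p) m
  rwa [ZMod.card] at this

lemma sum_inv_Icc (hp : p ≠ 2) :
    ∑ i ∈ Finset.Icc 1 (p - 1), ((i : ZMod p))⁻¹ = 0 := by
  classical
  rw [sum_Icc_eq p (fun x => x⁻¹)]
  have h : ∑ x : (ZMod p)ˣ, ((x : ZMod p))⁻¹ = ∑ x : (ZMod p)ˣ, ((x : ZMod p)) :=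
    Finset.sum_nbij' (fun x => x⁻¹) (fun x => x⁻¹) (fun _ _ => Finset.mem_univ _)
      (fun _ _ => Finset.mem_univ _) (fun a _ => inv_inv a) (fun a _ => inv_inv a)
      (fun a _ => (Units.val_inv_eq_inv_val a).symm)
  rw [h]
  have h1 := FiniteField.sum_pow_units (ZMod p) 1
  rw [ZMod.card] at h1
  simp only [pow_one] at h1
  rw [h1, if_neg]
  intro hdvd
  have hp2 : 2 < p := lt_of_le_of_ne (Fact.out : p.Prime).two_le (Ne.symm hp)
  have := Nat.le_of_dvd one_pos hdvd
  omega

end Stmt15Aux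

theorem stmt15 (p : ℕ) [Fact p.Prime] (hp : p ≠ 2)
    (e : Polynomial (ZMod p) ⧸ Ideal.span {(X : Polynomial (ZMod p)) ^ p})
    (he : e = Ideal.Quotient.mk (Ideal.span {(X : Polynomial (ZMod p)) ^ p})
      (∑ i ∈ Finset.range p, C ((i.factorial : ZMod p)⁻¹) * X ^ i))
    (ln : (Polynomial (ZMod p) ⧸ Ideal.span {(X : Polynomial (ZMod p)) ^ p}) →
      Polynomial (ZMod p) ⧸ Ideal.span {(X : Polynomial (ZMod p)) ^ p})
    (hln : ∀ u, ln u = -∑ i ∈ Finset.Icc 1 (p - 1), ((i : ZMod p))⁻¹ • u ^ i) :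
    e ^ p = 1 ∧
    ln e = Ideal.Quotient.mk (Ideal.span {(X : Polynomial (ZMod p)) ^ p}) X ∧
    ∃ φ : (Polynomial (ZMod p) ⧸ Ideal.span {(X : Polynomial (ZMod p)) ^ p - 1})
        ≃ₐ[ZMod p] (Polynomial (ZMod p) ⧸ Ideal.span {(X : Polynomial (ZMod p)) ^ p}),
      φ (Ideal.Quotient.mk (Ideal.span {(X : Polynomial (ZMod p)) ^ p - 1}) X) = e := by
  have hp2 : 2 < p := lt_of_le_of_ne (Fact.out : p.Prime).two_le (Ne.symm hp)
  have he1 : e = Ideal.Quotient.mk (Ideal.span {(X : Polynomial (ZMod p)) ^ p}) (Stmt15Aux.P p 1) := by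
    rw [he]
    congr 1
    rw [Stmt15Aux.P]
    exact Finset.sum_congr rfl fun k _ => by rw [one_pow, one_mul]
  have hepow : ∀ n : ℕ, e ^ n = Ideal.Quotient.mk (Ideal.span {(X : Polynomial (ZMod p)) ^ p}) (Stmt15Aux.P p (n : ZMod p)) := by
    intro n
    rw [he1]
    exact Stmt15Aux.mk_P_pow p n
  have ha : e ^ p = 1 := by
    rw [hepow p, ZMod.natCast_self, Stmt15Aux.P_zero, map_one]
  have hsmul : ∀ (c : ZMod p) (f : Polynomial (ZMod p)),
      c • Ideal.Quotient.mk (Ideal.span {(X : Polynomial (ZMod p)) ^ p}) f = Ideal.Quotient.mk (Ideal.span {(X : Polynomial (ZMod p)) ^ p}) (C c * f) := by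
    intro c f
    rw [← Polynomial.smul_eq_C_mul, ← Ideal.Quotient.mkₐ_eq_mk (ZMod p), map_smul]
  have hb : ln e = Ideal.Quotient.mk (Ideal.span {(X : Polynomial (ZMod p)) ^ p}) X := by
    rw [hln]
    have hterm : ∀ i ∈ Finset.Icc 1 (p - 1), ((i : ZMod p))⁻¹ • e ^ i
        = Ideal.Quotient.mk (Ideal.span {(X : Polynomial (ZMod p)) ^ p}) (C ((i : ZMod p))⁻¹ * Stmt15Aux.P p (i : ZMod p)) := by
      intro i _
      rw [hepow i, hsmul]
    rw [Finset.sum_congr rfl hterm, ← map_sum, ← map_neg, Ideal.Quotient.eq,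
      Ideal.mem_span_singleton, Polynomial.X_pow_dvd_iff]
    intro d hd
    rw [coeff_sub, coeff_neg, finset_sum_coeff]
    simp only [coeff_C_mul]
    rw [Finset.sum_congr rfl (fun i _ => by rw [Stmt15Aux.coeff_P p _ hd])]
    rcases Nat.eq_zero_or_pos d with h0 | hdpos
    · subst h0
      simp only [pow_zero, Nat.factorial_zero, Nat.cast_one, inv_one, mul_one, one_mul,
        coeff_X_zero, sub_zero, neg_eq_zero]
      exact Stmt15Aux.sum_inv_Icc p hp
    · have hstep : ∀ i ∈ Finset.Icc 1 (p - 1),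
          ((i : ZMod p))⁻¹ * ((i : ZMod p) ^ d * ((d.factorial : ZMod p))⁻¹)
            = (i : ZMod p) ^ (d - 1) * ((d.factorial : ZMod p))⁻¹ := by
        intro i hi
        rw [Finset.mem_Icc] at hi
        have hine : ((i : ZMod p)) ≠ 0 := by
          rw [Ne, ZMod.natCast_eq_zero_iff]
          intro hdvd
          have := Nat.le_of_dvd (by omega) hdvd
          omega
        have hpow : (i : ZMod p) ^ d = (i : ZMod p) * (i : ZMod p) ^ (d - 1) := by
          conv_lhs => rw [show d = 1 + (d - 1) by omega]
          rw [pow_add, pow_one]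
        rw [hpow, ← mul_assoc, ← mul_assoc, inv_mul_cancel₀ hine, one_mul]
      rw [Finset.sum_congr rfl hstep, ← Finset.sum_mul, Stmt15Aux.sum_pow_Icc]
      rcases eq_or_ne d 1 with h1 | h1
      · subst h1
        rw [if_pos ⟨0, by omega⟩, Polynomial.coeff_X_one]
        simp [Nat.factorial_one]
      · rw [if_neg, Polynomial.coeff_X, if_neg (Ne.symm h1)]
        · ring
        · intro hdvd
          have := Nat.le_of_dvd (by omega) hdvd
          omega
  refine ⟨ha, hb, ?_⟩
  have hroot : (aeval e) ((X : Polynomial (ZMod p)) ^ p - 1) = 0 := by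
    rw [map_sub, map_pow, aeval_X, map_one, ha, sub_self]
  let φ0 : (Polynomial (ZMod p) ⧸ Ideal.span {(X : Polynomial (ZMod p)) ^ p - 1}) →ₐ[ZMod p]
      (Polynomial (ZMod p) ⧸ Ideal.span {(X : Polynomial (ZMod p)) ^ p}) := AdjoinRoot.liftAlgHom _ (Algebra.ofId _ _) e hroot
  have hφ0X : φ0 (Ideal.Quotient.mk (Ideal.span {(X : Polynomial (ZMod p)) ^ p - 1}) X) = e :=
    AdjoinRoot.liftAlgHom_root _ _ _ hroot
  have hbX : ∃ y, φ0 y = Ideal.Quotient.mk (Ideal.span {(X : Polynomial (ZMod p)) ^ p}) X := by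
    refine ⟨-∑ i ∈ Finset.Icc 1 (p - 1), ((i : ZMod p))⁻¹ •
      (Ideal.Quotient.mk (Ideal.span {(X : Polynomial (ZMod p)) ^ p - 1}) X) ^ i, ?_⟩
    rw [map_neg, map_sum]
    simp only [map_smul, map_pow, hφ0X]
    rw [← hln e, hb]
  have hsurj : Function.Surjective φ0 := by
    intro z
    obtain ⟨g, rfl⟩ := Ideal.Quotient.mk_surjective z
    obtain ⟨y, hy⟩ := hbX
    refine ⟨aeval y g, ?_⟩
    rw [← Polynomial.aeval_algHom_apply, hy]
    have h2 : aeval (Ideal.Quotient.mk (Ideal.span {(X : Polynomial (ZMod p)) ^ p}) X) g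
        = (Ideal.Quotient.mkₐ (ZMod p) (Ideal.span {(X : Polynomial (ZMod p)) ^ p})) (aeval X g) := by
      rw [← Polynomial.aeval_algHom_apply, Ideal.Quotient.mkₐ_eq_mk]
    rw [h2, Polynomial.aeval_X_left_apply, Ideal.Quotient.mkₐ_eq_mk]
  have hmon1 : ((X : Polynomial (ZMod p)) ^ p - 1).Monic := by
    have := Polynomial.monic_X_pow_sub_C (1 : ZMod p) (Nat.Prime.ne_zero (Fact.out : p.Prime))
    simpa using this
  have hne1 : ((X : Polynomial (ZMod p)) ^ p - 1) ≠ 0 := hmon1.ne_zero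
  have hne2 : ((X : Polynomial (ZMod p)) ^ p) ≠ 0 := pow_ne_zero _ Polynomial.X_ne_zero
  have fd1 : FiniteDimensional (ZMod p)
      (Polynomial (ZMod p) ⧸ Ideal.span {(X : Polynomial (ZMod p)) ^ p - 1}) :=
    (AdjoinRoot.powerBasis hne1).finite
  have fd2 : FiniteDimensional (ZMod p) (Polynomial (ZMod p) ⧸ Ideal.span {(X : Polynomial (ZMod p)) ^ p}) :=
    (AdjoinRoot.powerBasis hne2).finite
  have hdeg : ((X : Polynomial (ZMod p)) ^ p - 1).natDegree
      = ((X : Polynomial (ZMod p)) ^ p).natDegree := by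
    rw [Polynomial.natDegree_X_pow]
    have h1 : ((X : Polynomial (ZMod p)) ^ p - 1) = X ^ p - C 1 := by rw [map_one]
    rw [h1, Polynomial.natDegree_X_pow_sub_C]
  have d1 : Module.finrank (ZMod p)
      (Polynomial (ZMod p) ⧸ Ideal.span {(X : Polynomial (ZMod p)) ^ p - 1})
      = ((X : Polynomial (ZMod p)) ^ p - 1).natDegree := (AdjoinRoot.powerBasis hne1).finrank
  have d2 : Module.finrank (ZMod p)
      (Polynomial (ZMod p) ⧸ Ideal.span {(X : Polynomial (ZMod p)) ^ p})
      = ((X : Polynomial (ZMod p)) ^ p).natDegree := (AdjoinRoot.powerBasis hne2).finrank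
  have hdim : Module.finrank (ZMod p)
      (Polynomial (ZMod p) ⧸ Ideal.span {(X : Polynomial (ZMod p)) ^ p - 1})
      = Module.finrank (ZMod p)
        (Polynomial (ZMod p) ⧸ Ideal.span {(X : Polynomial (ZMod p)) ^ p}) := by
    rw [d1, d2, hdeg]
  have hinj : Function.Injective φ0 :=
    (LinearMap.injective_iff_surjective_of_finrank_eq_finrank hdim
      (f := φ0.toLinearMap)).mpr hsurj
  refine ⟨AlgEquiv.ofBijective φ0 ⟨hinj, hsurj⟩, ?_⟩
  show φ0 (Ideal.Quotient.mk (Ideal.span {(X : Polynomial (ZMod p)) ^ p - 1}) X) = e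
  exact hφ0X
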